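/- Let A be a bialgebra over a commutative ring R, let w ∈ A* be a normalized two-sided integral on A, and let M be a left module over the convolution algebra A*. Then M^inv equals w • M := {w • m : m ∈ M}, M^inv is an A*-submodule of M, and M is the internal direct sum of the A*-submodules w • M and (ε − w) • M; explicitly, every m ∈ M decomposes uniquely as m = w • m + (ε − w) • m with w • m ∈ M^inv. -/
import Mathlib


/-- The convolution product on the dual `A* = Hom_R(A, R)` of a bialgebra `A`:
`(f * g)(a) = Σ f(a₍₁₎) · g(a₍₂₎)`. -/
noncomputable def conv {R A : Type*} [CommRing R] [Ring A] [Bialgebra R A]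
    (f g : Module.Dual R A) : Module.Dual R A :=
  LinearMap.mul' R R ∘ₗ TensorProduct.map f g ∘ₗ Coalgebra.comul

/-- A normalized two-sided integral on a bialgebra `A`: an element `w ∈ A*` with
`f * w = w * f = f(1) • w` for all `f ∈ A*` and `w(1) = 1`. -/
def IsNormalizedIntegral {R A : Type*} [CommRing R] [Ring A] [Bialgebra R A]
    (w : Module.Dual R A) : Prop :=
  (∀ f : Module.Dual R A, conv f w = f 1 • w) ∧
  (∀ f : Module.Dual R A, conv w f = f 1 • w) ∧
  w 1 = 1

/-- A structure of left module over the convolution algebra `A*` on an `R`-module `M`: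
an `R`-bilinear action of `A*` on `M` which is unital (the counit `ε` is the unit of the
convolution algebra) and associative for the convolution product. -/
structure ConvModuleStruct (R A M : Type*) [CommRing R] [Ring A] [Bialgebra R A]
    [AddCommGroup M] [Module R M] where
  smul : Module.Dual R A →ₗ[R] M →ₗ[R] M
  counit_smul : ∀ m : M, smul Coalgebra.counit m = m
  conv_smul : ∀ (f g : Module.Dual R A) (m : M),
    smul (conv f g) m = smul f (smul g m)

/-- The invariants `M^inv` of a module `M` over the convolution algebra `A*`:
those `m` with `f • m = f(1) • m` for all `f ∈ A*`. -/
def ConvModuleStruct.inv {R A M : Type*} [CommRing R] [Ring A] [Bialgebra R A]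
    [AddCommGroup M] [Module R M] (μ : ConvModuleStruct R A M) : Set M :=
  {m : M | ∀ f : Module.Dual R A, μ.smul f m = f 1 • m}

theorem invariants_eq_and_direct_sum {R A M : Type*} [CommRing R] [Ring A] [Bialgebra R A]
    [AddCommGroup M] [Module R M] (μ : ConvModuleStruct R A M)
    (w : Module.Dual R A) (hw : IsNormalizedIntegral w) :
    -- `M^inv = w • M`
    (μ.inv = Set.range (μ.smul w)) ∧
    -- `M^inv` is an `A*`-submodule of `M`
    ((0 : M) ∈ μ.inv ∧ (∀ m m' : M, m ∈ μ.inv → m' ∈ μ.inv → m + m' ∈ μ.inv) ∧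
      (∀ (r : R) (m : M), m ∈ μ.inv → r • m ∈ μ.inv) ∧
      (∀ (f : Module.Dual R A) (m : M), m ∈ μ.inv → μ.smul f m ∈ μ.inv)) ∧
    -- `w • M` and `(ε - w) • M` are `A*`-submodules
    (∀ (f : Module.Dual R A) (m : M), m ∈ Set.range (μ.smul w) →
      μ.smul f m ∈ Set.range (μ.smul w)) ∧
    (∀ (f : Module.Dual R A) (m : M), m ∈ Set.range (μ.smul (Coalgebra.counit - w)) →
      μ.smul f m ∈ Set.range (μ.smul (Coalgebra.counit - w))) ∧
    -- every `m` decomposes as `m = w • m + (ε - w) • m` with `w • m ∈ M^inv`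
    (∀ m : M, m = μ.smul w m + μ.smul (Coalgebra.counit - w) m ∧ μ.smul w m ∈ μ.inv) ∧
    -- the decomposition is unique (`M` is the internal direct sum)
    (∀ (m m₁ m₂ : M), m₁ ∈ Set.range (μ.smul w) →
      m₂ ∈ Set.range (μ.smul (Coalgebra.counit - w)) → m = m₁ + m₂ →
      m₁ = μ.smul w m ∧ m₂ = μ.smul (Coalgebra.counit - w) m) := by
  obtain ⟨hfw, hwf, hw1⟩ := hw
  have hε1 : (Coalgebra.counit : Module.Dual R A) 1 = 1 := Bialgebra.counit_one
  -- `w • m` is invariant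
  have hinv : ∀ m : M, μ.smul w m ∈ μ.inv := by
    intro m f
    rw [← μ.conv_smul, hfw, map_smul, LinearMap.smul_apply]
  -- invariants are fixed by `w`
  have hfix : ∀ m ∈ μ.inv, μ.smul w m = m := by
    intro m hm
    rw [hm w, hw1, one_smul]
  -- `(ε - w) • m = m - w • m`
  have he : ∀ m : M, μ.smul (Coalgebra.counit - w) m = m - μ.smul w m := by
    intro m
    rw [map_sub, LinearMap.sub_apply, μ.counit_smul]
  -- `w • ((ε - w) • m) = 0`
  have hwe : ∀ m : M, μ.smul w (μ.smul (Coalgebra.counit - w) m) = 0 := by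
    intro m
    rw [← μ.conv_smul, hwf, LinearMap.sub_apply, hε1, hw1, sub_self, zero_smul,
      map_zero, LinearMap.zero_apply]
  -- invariance closure facts
  have hsmul_inv : ∀ (r : R) (m : M), m ∈ μ.inv → r • m ∈ μ.inv := by
    intro r m hm f
    rw [map_smul, hm f, smul_comm]
  refine ⟨?_, ⟨?_, ?_, hsmul_inv, ?_⟩, ?_, ?_, ?_, ?_⟩
  · ext m
    exact ⟨fun h => ⟨m, hfix m h⟩, fun ⟨x, hx⟩ => hx ▸ hinv x⟩
  · intro f; simp
  · intro m m' hm hm' f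
    rw [map_add, hm f, hm' f, smul_add]
  · intro f m hm
    intro g
    rw [hm f]
    exact hsmul_inv (f 1) m hm g
  · rintro f m ⟨y, rfl⟩
    refine ⟨f 1 • y, ?_⟩
    rw [map_smul, ← μ.conv_smul, hfw, map_smul, LinearMap.smul_apply]
  · rintro f m ⟨y, rfl⟩
    have h0 : μ.smul w (μ.smul f (μ.smul (Coalgebra.counit - w) y)) = 0 := by
      rw [← μ.conv_smul, hwf, map_smul, LinearMap.smul_apply, hwe, smul_zero]
    exact ⟨μ.smul f (μ.smul (Coalgebra.counit - w) y), by rw [he, h0, sub_zero]⟩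
  · intro m
    exact ⟨by rw [he]; abel, hinv m⟩
  · rintro m m₁ m₂ ⟨x₁, rfl⟩ ⟨x₂, rfl⟩ rfl
    have h1 : μ.smul w (μ.smul w x₁) = μ.smul w x₁ := by
      rw [← μ.conv_smul, hwf, hw1, one_smul]
    have key : μ.smul w (μ.smul w x₁ + μ.smul (Coalgebra.counit - w) x₂) = μ.smul w x₁ := by
      rw [map_add, h1, hwe, add_zero]
    refine ⟨key.symm, ?_⟩
    rw [he (μ.smul w x₁ + μ.smul (Coalgebra.counit - w) x₂), key]
    abel
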